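/- For a non-degenerate regular ladder with m steps, the n-th Fourier coefficient of the periodic function Φ in the asymptotics E(λ) = Φ(log_m λ)λ^α e^λ + O(1) equals c_n = (Δ_2(1−Δ_1)/(Δ_1 ln m)) · Γ(α_n) ζ(α_n), where α_n = −α − 2πin/ln m and α = log_m Δ_1. -/

import Mathlib

open MeasureTheory Real Complex

/-- `f̃₁(λ) = Δ₂(e^{(m-1)λ}-1)e^λ / (Δ₁(e^λ-1)(e^{mλ}-1)λ^α)` with
`α = log_m Δ₁`. -/
noncomputable def ftildeReg (m : ℕ) (Δ₁ Δ₂ : ℝ) (lam : ℝ) : ℝ :=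
  Δ₂ * (Real.exp ((m - 1 : ℝ) * lam) - 1) * Real.exp lam /
    (Δ₁ * (Real.exp lam - 1) * (Real.exp (m * lam) - 1) *
      lam ^ (Real.log Δ₁ / Real.log m))

/-- The `1`-periodic function `Φ(x) = ∑_{k ∈ ℤ} f̃₁(m^{k+x})` of a regular
ladder. -/
noncomputable def PhiReg (m : ℕ) (Δ₁ Δ₂ : ℝ) (x : ℝ) : ℝ :=
  ∑' k : ℤ, ftildeReg m Δ₁ Δ₂ ((m : ℝ) ^ ((k : ℝ) + x))

/-- For a non-degenerate regular ladder, the `n`-th Fourier coefficient of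
`Φ` equals `c_n = (Δ₂(1-Δ₁)/(Δ₁ ln m)) Γ(α_n) ζ(α_n)` with
`α_n = -α - 2πin/ln m`, `α = log_m Δ₁`. -/
noncomputable def hker (m : ℕ) (t : ℝ) : ℝ :=
  1/(Real.exp t - 1) - 1/(Real.exp (m*t) - 1)

lemma exp_sub_one_pos {t : ℝ} (ht : 0 < t) : 0 < Real.exp t - 1 := by
  have := Real.one_lt_exp_iff.mpr ht; linarith

lemma hker_nonneg (m : ℕ) (hm : 2 ≤ m) {t : ℝ} (ht : 0 < t) : 0 ≤ hker m t := by
  have hmt : t ≤ (m:ℝ) * t := by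
    have : (1:ℝ) ≤ m := by exact_mod_cast Nat.one_le_of_lt hm
    nlinarith
  have h1 := exp_sub_one_pos ht
  have h2 := exp_sub_one_pos (lt_of_lt_of_le ht hmt)
  have h3 : Real.exp t - 1 ≤ Real.exp ((m:ℝ)*t) - 1 := by
    have := Real.exp_le_exp.mpr hmt; linarith
  have := one_div_le_one_div_of_le h1 h3
  simp only [hker]; linarith

lemma ftilde_eq (m : ℕ) (Δ₁ Δ₂ : ℝ) (hm : 2 ≤ m) (hΔ₁ : 0 < Δ₁) {lam : ℝ} (hl : 0 < lam) :
    ftildeReg m Δ₁ Δ₂ lam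
      = (Δ₂/Δ₁) * lam ^ (-(Real.log Δ₁ / Real.log m)) * hker m lam := by
  have hlm : 0 < (m:ℝ) * lam := by
    have : (0:ℝ) < m := by positivity
    positivity
  have he1 : Real.exp lam - 1 ≠ 0 := (exp_sub_one_pos hl).ne'
  have he2 : Real.exp ((m:ℝ)*lam) - 1 ≠ 0 := (exp_sub_one_pos hlm).ne'
  have hpow : lam ^ (Real.log Δ₁ / Real.log m) ≠ 0 := by positivity
  have hnum : Δ₂ * (Real.exp ((m - 1 : ℝ) * lam) - 1) * Real.exp lam
      = Δ₂ * (Real.exp ((m:ℝ) * lam) - Real.exp lam) := by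
    have : Real.exp ((m - 1 : ℝ) * lam) * Real.exp lam = Real.exp ((m:ℝ) * lam) := by
      rw [← Real.exp_add]; ring_nf
    linear_combination Δ₂ * this
  unfold ftildeReg hker
  rw [hnum, Real.rpow_neg hl.le]
  field_simp
  ring_nf

lemma hasSum_geom_exp {t : ℝ} (ht : 0 < t) :
    HasSum (fun j : ℕ ↦ Real.exp (-((j:ℝ)+1) * t)) (1/(Real.exp t - 1)) := by
  have hr0 : 0 < Real.exp (-t) := Real.exp_pos _
  have hr1 : Real.exp (-t) < 1 := by
    rw [Real.exp_lt_one_iff]; linarith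
  have hgeo := hasSum_geometric_of_lt_one hr0.le hr1
  have h2 := hgeo.mul_left (Real.exp (-t))
  have heq : ∀ j : ℕ, Real.exp (-t) * Real.exp (-t) ^ j = Real.exp (-((j:ℝ)+1) * t) := by
    intro j
    rw [← Real.exp_nat_mul, ← Real.exp_add]
    ring_nf
  have hval : Real.exp (-t) * (1 - Real.exp (-t))⁻¹ = 1/(Real.exp t - 1) := by
    have h1 := exp_sub_one_pos ht
    have he : Real.exp (-t) = (Real.exp t)⁻¹ := Real.exp_neg t
    have hepos := Real.exp_pos t
    rw [he]
    field_simp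
  rw [hval] at h2
  exact h2.congr_fun (fun j ↦ (heq j).symm)

lemma hasSum_geom_exp_C {t : ℝ} (ht : 0 < t) :
    HasSum (fun j : ℕ ↦ ((1:ℂ)) * (Real.exp (-((j:ℝ)+1) * t) : ℝ))
      ((1/(Real.exp t - 1) : ℝ) : ℂ) := by
  simp only [one_mul]
  exact Complex.hasSum_ofReal.mpr (hasSum_geom_exp ht)

lemma summable_shift (σ : ℝ) (hσ : 1 < σ) :
    Summable (fun j : ℕ ↦ (1:ℝ) / ((j:ℝ)+1) ^ σ) := by
  have := Real.summable_one_div_nat_rpow.mpr hσ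
  exact_mod_cast (summable_nat_add_iff 1).mpr this

noncomputable def F1 : ℝ → ℂ := fun t ↦ ((1/(Real.exp t - 1) : ℝ) : ℂ)

lemma mellin_F1 {s : ℂ} (hs : 1 < s.re) :
    mellin F1 s = Complex.Gamma s * riemannZeta s := by
  have h := hasSum_mellin (ι := ℕ) (a := fun _ ↦ (1:ℂ)) (p := fun j ↦ (j:ℝ)+1)
    (F := F1) (s := s)
    (fun j ↦ Or.inr (by positivity)) (by linarith : 0 < s.re)
    (fun t ht ↦ hasSum_geom_exp_C ht)
    (by simpa using summable_shift s.re hs)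
  rw [← h.tsum_eq, zeta_eq_tsum_one_div_nat_add_one_cpow hs, ← tsum_mul_left]
  congr 1; funext j
  push_cast
  rw [mul_one, mul_one_div]

lemma contOn_F1 : ContinuousOn F1 (Set.Ioi 0) := by
  apply Complex.continuous_ofReal.comp_continuousOn
  apply ContinuousOn.div continuousOn_const
    (Real.continuous_exp.continuousOn.sub continuousOn_const)
  intro t ht
  exact (exp_sub_one_pos ht).ne'

lemma mc_F1 {s : ℂ} (hs : 1 < s.re) : MellinConvergent F1 s := by
  refine mellinConvergent_of_isBigO_rpow_exp (a := 1/2) (by norm_num)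
    (contOn_F1.locallyIntegrableOn measurableSet_Ioi) ?_ (b := 1) ?_ (by linarith)
  · rw [Asymptotics.isBigO_iff]
    refine ⟨(1 - Real.exp (-1))⁻¹, Filter.eventually_atTop.mpr ⟨1, fun t ht ↦ ?_⟩⟩
    have h0 : 0 < t := by linarith
    have hp := exp_sub_one_pos h0
    have key : Real.exp t * (1 - Real.exp (-1)) ≤ Real.exp t - 1 := by
      have : 1 ≤ Real.exp t * Real.exp (-1) := by
        rw [← Real.exp_add]
        have : (0:ℝ) ≤ t + -1 := by linarith
        calc (1:ℝ) = Real.exp 0 := (Real.exp_zero).symm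
        _ ≤ _ := Real.exp_le_exp.mpr this
      nlinarith
    have he1 : (0:ℝ) < 1 - Real.exp (-1) := by
      have : Real.exp (-1) < 1 := by rw [Real.exp_lt_one_iff]; norm_num
      linarith
    simp only [F1, Complex.norm_real, Real.norm_eq_abs]
    rw [_root_.abs_of_nonneg (show (0:ℝ) ≤ 1/(Real.exp t - 1) by positivity),
      _root_.abs_of_nonneg (Real.exp_pos _).le]
    have hexp : Real.exp (-(1/2) * t) * (Real.exp t - 1) ≥ Real.exp (t/2) * (1 - Real.exp (-1)) := by
      have e1 : Real.exp (-(1/2) * t) * Real.exp t = Real.exp (t/2) := by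
        rw [← Real.exp_add]; ring_nf
      have e2 : Real.exp (-(1/2)*t) ≤ Real.exp (t/2) := by
        apply Real.exp_le_exp.mpr; linarith
      nlinarith [Real.exp_pos (-(1/2)*t), Real.exp_pos (t/2)]
    have h12 : (1:ℝ) ≤ Real.exp (t/2) := by
      calc (1:ℝ) = Real.exp 0 := (Real.exp_zero).symm
      _ ≤ _ := Real.exp_le_exp.mpr (by linarith)
    rw [div_le_iff₀ hp]
    calc (1:ℝ) ≤ Real.exp (t/2) * (1 - Real.exp (-1)) * (1 - Real.exp (-1))⁻¹ := by
          rw [mul_assoc, mul_inv_cancel₀ he1.ne', mul_one]; exact h12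
    _ ≤ (1 - Real.exp (-1))⁻¹ * (Real.exp (-(1/2) * t) * (Real.exp t - 1)) := by
          rw [mul_comm]
          exact mul_le_mul_of_nonneg_left hexp (by positivity)
    _ = (1 - Real.exp (-1))⁻¹ * Real.exp (-(1/2) * t) * (Real.exp t - 1) := by ring
  · rw [Asymptotics.isBigO_iff]
    refine ⟨1, ?_⟩
    filter_upwards [self_mem_nhdsWithin] with t (ht : 0 < t)
    have hp := exp_sub_one_pos ht
    have hts : t ≤ Real.exp t - 1 := by linarith [Real.add_one_le_exp t]
    simp only [F1, Complex.norm_real, Real.norm_eq_abs, one_mul]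
    rw [Real.rpow_neg_one, _root_.abs_of_nonneg (show (0:ℝ) ≤ 1/(Real.exp t - 1) by positivity),
      _root_.abs_of_nonneg (show (0:ℝ) ≤ t⁻¹ by positivity), one_div]
    exact inv_anti₀ ht hts

lemma iUnion_Ico_exp {L : ℝ} (hL : 0 < L) :
    (⋃ k : ℤ, Set.Ico (Real.exp (L*k)) (Real.exp (L*(k+1)))) = Set.Ioi 0 := by
  ext t
  simp only [Set.mem_iUnion, Set.mem_Ico, Set.mem_Ioi]
  constructor
  · rintro ⟨k, h1, _⟩
    exact lt_of_lt_of_le (Real.exp_pos _) h1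
  · intro ht
    refine ⟨⌊Real.log t / L⌋, ?_, ?_⟩
    · calc Real.exp (L * ⌊Real.log t / L⌋) ≤ Real.exp (L * (Real.log t / L)) := by
            apply Real.exp_le_exp.mpr
            exact mul_le_mul_of_nonneg_left (Int.floor_le _) hL.le
      _ = t := by rw [mul_div_cancel₀ _ hL.ne', Real.exp_log ht]
    · calc t = Real.exp (L * (Real.log t / L)) := by
            rw [mul_div_cancel₀ _ hL.ne', Real.exp_log ht]
      _ < Real.exp (L * (⌊Real.log t / L⌋ + 1)) := by
            apply Real.exp_lt_exp.mpr
            exact (mul_lt_mul_iff_right₀ hL).mpr (Int.lt_floor_add_one _)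

lemma pairwise_disjoint_Ico_exp {L : ℝ} (hL : 0 < L) :
    Pairwise (Function.onFun Disjoint
      fun k : ℤ ↦ Set.Ico (Real.exp (L*k)) (Real.exp (L*(k+1)))) := by
  intro i j hij
  rw [Function.onFun, Set.Ico_disjoint_Ico]
  rcases hij.lt_or_gt with h | h
  · apply le_trans (min_le_left _ _)
    apply le_trans _ (le_max_right _ _)
    apply Real.exp_le_exp.mpr
    have : (i:ℝ) + 1 ≤ (j:ℝ) := by exact_mod_cast h
    nlinarith
  · apply le_trans (min_le_right _ _)
    apply le_trans _ (le_max_left _ _)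
    apply Real.exp_le_exp.mpr
    have : (j:ℝ) + 1 ≤ (i:ℝ) := by exact_mod_cast h
    nlinarith

section Subst

variable {m : ℕ} {Δ₁ Δ₂ : ℝ}

lemma hm_pos (hm : 2 ≤ m) : (0:ℝ) < m := by positivity

lemma hL_pos (hm : 2 ≤ m) : 0 < Real.log m :=
  Real.log_pos (by exact_mod_cast hm.trans_lt' one_lt_two)

lemma phi_hasDeriv (hm : 2 ≤ m) (k : ℤ) (x : ℝ) :
    HasDerivAt (fun x : ℝ ↦ Real.exp (Real.log m * ((k:ℝ) + x)))
      (Real.log m * Real.exp (Real.log m * ((k:ℝ) + x))) x := by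
  have h1 : HasDerivAt (fun x : ℝ ↦ Real.log m * ((k:ℝ) + x)) (Real.log m) x := by
    simpa using (((hasDerivAt_id x).const_add (k:ℝ)).const_mul (Real.log m))
  exact ((Real.hasDerivAt_exp _).comp x h1).congr_deriv (mul_comm _ _)

lemma contOn_hker (hm : 2 ≤ m) : ContinuousOn (hker m) (Set.Ioi 0) := by
  unfold hker
  have hmr : (0:ℝ) < m := hm_pos hm
  apply ContinuousOn.sub
  · apply ContinuousOn.div continuousOn_const
      (Real.continuous_exp.continuousOn.sub continuousOn_const)
    intro t ht
    exact (exp_sub_one_pos ht).ne'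
  · apply ContinuousOn.div continuousOn_const
      ((Real.continuous_exp.comp (continuous_const.mul continuous_id)).continuousOn.sub
        continuousOn_const)
    intro t ht
    exact (exp_sub_one_pos (by exact mul_pos hmr ht)).ne'

lemma contOn_ftilde (hm : 2 ≤ m) (hΔ₁ : 0 < Δ₁) :
    ContinuousOn (ftildeReg m Δ₁ Δ₂) (Set.Ioi 0) := by
  have : ∀ t ∈ Set.Ioi (0:ℝ), (Δ₂/Δ₁) * t ^ (-(Real.log Δ₁ / Real.log m)) * hker m t
      = ftildeReg m Δ₁ Δ₂ t := fun t ht ↦ (ftilde_eq m Δ₁ Δ₂ hm hΔ₁ ht).symm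
  apply ContinuousOn.congr _ (fun t ht ↦ (this t ht).symm)
  apply ContinuousOn.mul _ (contOn_hker hm)
  apply ContinuousOn.mul continuousOn_const
  intro t ht
  exact (Real.continuousAt_rpow_const t _ (Or.inl (ne_of_gt ht))).continuousWithinAt

lemma subst_real (hm : 2 ≤ m) (hΔ₁ : 0 < Δ₁) (hΔ₂ : 0 < Δ₂) (k : ℤ) :
    (∫ t in (Real.exp (Real.log m * k))..(Real.exp (Real.log m * (k+1))),
        t ^ (-(Real.log Δ₁ / Real.log m) - 1) * hker m t)
    = (Real.log m * Δ₁ / Δ₂) *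
        ∫ x in (0:ℝ)..1, ftildeReg m Δ₁ Δ₂ ((m:ℝ) ^ ((k:ℝ)+x)) := by
  set L := Real.log m with hLdef
  have hL : 0 < L := hL_pos hm
  set σ : ℝ := -(Real.log Δ₁ / L) with hσdef
  set φ : ℝ → ℝ := fun x ↦ Real.exp (L * ((k:ℝ) + x)) with hφdef
  have hφpos : ∀ x, 0 < φ x := fun x ↦ Real.exp_pos _
  have himg : φ '' (Set.uIcc 0 1) ⊆ Set.Ioi 0 := by
    rintro t ⟨x, _, rfl⟩; exact hφpos x
  have hsub := intervalIntegral.integral_comp_smul_deriv'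
    (f := φ) (f' := fun x ↦ L * φ x)
    (g := fun t ↦ t ^ (σ - 1) * hker m t) (a := 0) (b := 1)
    (fun x _ ↦ phi_hasDeriv hm k x)
    (continuousOn_const.mul (Real.continuous_exp.comp
      (continuous_const.mul (continuous_const.add continuous_id))).continuousOn)
    (ContinuousOn.mono (ContinuousOn.mul (fun t ht ↦
      (Real.continuousAt_rpow_const t _ (Or.inl (ne_of_gt ht))).continuousWithinAt)
      (contOn_hker hm)) himg)
  have hpt : ∀ x : ℝ, (L * φ x) • ((φ x) ^ (σ - 1) * hker m (φ x))
      = (L * Δ₁ / Δ₂) • (ftildeReg m Δ₁ Δ₂ ((m:ℝ) ^ ((k:ℝ)+x))) := by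
    intro x
    have hlam := hφpos x
    have hrp : (m:ℝ) ^ ((k:ℝ)+x) = φ x := Real.rpow_def_of_pos (hm_pos hm) _
    have hft := ftilde_eq m Δ₁ Δ₂ hm hΔ₁ hlam
    rw [hrp, hft]
    have hσ1 : (φ x) ^ (σ - 1) = (φ x) ^ σ / φ x := by
      rw [Real.rpow_sub hlam, Real.rpow_one]
    rw [hσ1, smul_eq_mul, smul_eq_mul]
    field_simp
    ring
  calc (∫ t in (Real.exp (L * k))..(Real.exp (L * (k+1))), t ^ (σ - 1) * hker m t)
      = ∫ t in (φ 0)..(φ 1), t ^ (σ - 1) * hker m t := by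
        norm_num [hφdef]
    _ = ∫ x in (0:ℝ)..1, (L * φ x) • ((φ x) ^ (σ - 1) * hker m (φ x)) := hsub.symm
    _ = ∫ x in (0:ℝ)..1, (L * Δ₁ / Δ₂) • (ftildeReg m Δ₁ Δ₂ ((m:ℝ) ^ ((k:ℝ)+x))) := by
        simp_rw [hpt]
    _ = (L * Δ₁ / Δ₂) * ∫ x in (0:ℝ)..1, ftildeReg m Δ₁ Δ₂ ((m:ℝ) ^ ((k:ℝ)+x)) := by
        rw [intervalIntegral.integral_smul, smul_eq_mul]

end Subst

section SubstC

variable {m : ℕ} {Δ₁ Δ₂ : ℝ}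

lemma subst_complex (hm : 2 ≤ m) (hΔ₁ : 0 < Δ₁) (hΔ₂ : 0 < Δ₂) (n k : ℤ) :
    (∫ t in (Real.exp (Real.log m * k))..(Real.exp (Real.log m * (k+1))),
        (t:ℂ) ^ ((((-(Real.log Δ₁ / Real.log m) : ℝ) : ℂ)
          - 2 * Real.pi * Complex.I * n / (Real.log m : ℝ)) - 1) * ((hker m t : ℝ) : ℂ))
    = ((Real.log m * Δ₁ / Δ₂ : ℝ) : ℂ) *
        ∫ x in (0:ℝ)..1, ((ftildeReg m Δ₁ Δ₂ ((m:ℝ) ^ ((k:ℝ)+x)) : ℂ)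
          * Complex.exp (-2 * Real.pi * Complex.I * n * x)) := by
  set L := Real.log m with hLdef
  have hL : 0 < L := hL_pos hm
  set s : ℂ := (((-(Real.log Δ₁ / L) : ℝ) : ℂ) - 2 * Real.pi * Complex.I * n / (L : ℝ)) with hsdef
  set φ : ℝ → ℝ := fun x ↦ Real.exp (L * ((k:ℝ) + x)) with hφdef
  have hφpos : ∀ x, 0 < φ x := fun x ↦ Real.exp_pos _
  have himg : φ '' (Set.uIcc 0 1) ⊆ Set.Ioi 0 := by
    rintro t ⟨x, _, rfl⟩; exact hφpos x
  have hgc : ContinuousOn (fun t : ℝ ↦ (t:ℂ) ^ (s - 1) * ((hker m t : ℝ) : ℂ)) (Set.Ioi 0) := by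
    apply ContinuousOn.mul
    · intro t ht
      exact (Complex.continuousAt_ofReal_cpow_const t _ (Or.inr (ne_of_gt ht))).continuousWithinAt
    · exact Complex.continuous_ofReal.comp_continuousOn (contOn_hker hm)
  have hsub := intervalIntegral.integral_comp_smul_deriv'
    (f := φ) (f' := fun x ↦ L * φ x)
    (g := fun t ↦ (t:ℂ) ^ (s - 1) * ((hker m t : ℝ) : ℂ)) (a := 0) (b := 1)
    (fun x _ ↦ phi_hasDeriv hm k x)
    (continuousOn_const.mul (Real.continuous_exp.comp
      (continuous_const.mul (continuous_const.add continuous_id))).continuousOn)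
    (hgc.mono himg)
  have hpt : ∀ x : ℝ, (L * φ x) • ((φ x : ℂ) ^ (s - 1) * ((hker m (φ x) : ℝ) : ℂ))
      = ((L * Δ₁ / Δ₂ : ℝ) : ℂ) * ((ftildeReg m Δ₁ Δ₂ ((m:ℝ) ^ ((k:ℝ)+x)) : ℂ)
          * Complex.exp (-2 * Real.pi * Complex.I * n * x)) := by
    intro x
    have hlam := hφpos x
    have hlamC : ((φ x : ℝ) : ℂ) ≠ 0 := Complex.ofReal_ne_zero.mpr hlam.ne'
    have hrp : (m:ℝ) ^ ((k:ℝ)+x) = φ x := Real.rpow_def_of_pos (hm_pos hm) _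
    have hft := ftilde_eq m Δ₁ Δ₂ hm hΔ₁ hlam
    have hlog : Real.log (φ x) = L * ((k:ℝ) + x) := Real.log_exp _
    -- (φ x : ℂ) ^ (s - 1) = (φ x)^s / φ x
    have hs1 : ((φ x : ℝ) : ℂ) ^ (s - 1) = (φ x : ℂ) ^ s / (φ x : ℂ) := by
      rw [Complex.cpow_sub _ _ hlamC, Complex.cpow_one]
    -- split s
    have hsplit : ((φ x : ℝ) : ℂ) ^ s
        = ((φ x ^ (-(Real.log Δ₁ / L)) : ℝ) : ℂ)
            * Complex.exp (-2 * Real.pi * Complex.I * n * x) := by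
      have h1 : ((φ x : ℝ) : ℂ) ^ s
          = (φ x : ℂ) ^ (((-(Real.log Δ₁ / L) : ℝ) : ℂ))
            * (φ x : ℂ) ^ (-(2 * Real.pi * Complex.I * n / (L : ℝ))) := by
        rw [hsdef, sub_eq_add_neg, Complex.cpow_add _ _ hlamC]
      rw [h1, ← Complex.ofReal_cpow hlam.le]
      congr 1
      rw [Complex.cpow_def_of_ne_zero hlamC, ← Complex.ofReal_log hlam.le, hlog]
      have harg : ((L * ((k:ℝ) + x) : ℝ) : ℂ) * (-(2 * Real.pi * Complex.I * n / (L : ℝ)))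
          = -2 * Real.pi * Complex.I * n * x + (-(n*k) : ℤ) * (2 * Real.pi * Complex.I) := by
        have hLC : (L : ℂ) ≠ 0 := Complex.ofReal_ne_zero.mpr hL.ne'
        push_cast
        field_simp
        ring
      rw [harg, Complex.exp_add, Complex.exp_int_mul_two_pi_mul_I, mul_one]
    rw [hs1, hsplit, hrp, hft]
    rw [Complex.real_smul]
    have hd1 : (Δ₁:ℂ) ≠ 0 := Complex.ofReal_ne_zero.mpr hΔ₁.ne'
    have hd2 : (Δ₂:ℂ) ≠ 0 := Complex.ofReal_ne_zero.mpr hΔ₂.ne'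
    push_cast
    field_simp
    ring
  calc (∫ t in (Real.exp (L * k))..(Real.exp (L * (k+1))),
        (t:ℂ) ^ (s - 1) * ((hker m t : ℝ) : ℂ))
      = ∫ t in (φ 0)..(φ 1), (t:ℂ) ^ (s - 1) * ((hker m t : ℝ) : ℂ) := by
        norm_num [hφdef]
    _ = ∫ x in (0:ℝ)..1, (L * φ x) • ((φ x : ℂ) ^ (s - 1) * ((hker m (φ x) : ℝ) : ℂ)) :=
        hsub.symm
    _ = ∫ x in (0:ℝ)..1, ((L * Δ₁ / Δ₂ : ℝ) : ℂ) * ((ftildeReg m Δ₁ Δ₂ ((m:ℝ) ^ ((k:ℝ)+x)) : ℂ)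
          * Complex.exp (-2 * Real.pi * Complex.I * n * x)) := by
        simp_rw [hpt]
    _ = ((L * Δ₁ / Δ₂ : ℝ) : ℂ) * ∫ x in (0:ℝ)..1, ((ftildeReg m Δ₁ Δ₂ ((m:ℝ) ^ ((k:ℝ)+x)) : ℂ)
          * Complex.exp (-2 * Real.pi * Complex.I * n * x)) := by
        rw [intervalIntegral.integral_const_mul]

end SubstC

section MellinH

variable {m : ℕ} {Δ₁ Δ₂ : ℝ}

lemma mc_F2 {s : ℂ} (hm : 2 ≤ m) (hs : 1 < s.re) :
    MellinConvergent (fun t ↦ F1 ((m:ℝ)*t)) s :=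
  (MellinConvergent.comp_mul_left (hm_pos hm)).mpr (mc_F1 hs)

lemma hasMellin_hker {s : ℂ} (hm : 2 ≤ m) (hs : 1 < s.re) :
    HasMellin (fun t ↦ ((hker m t : ℝ) : ℂ)) s
      ((1 - ((m:ℝ):ℂ) ^ (-s)) * (Complex.Gamma s * riemannZeta s)) := by
  have h2 := hasMellin_sub (mc_F1 hs) (mc_F2 hm hs)
  have hfun : (fun t ↦ F1 t - F1 ((m:ℝ)*t)) = fun t ↦ ((hker m t : ℝ) : ℂ) := by
    funext t
    simp only [F1, hker]
    push_cast
    ring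
  rw [hfun] at h2
  refine ⟨h2.1, ?_⟩
  rw [h2.2, mellin_comp_mul_left F1 s (hm_pos hm), mellin_F1 hs, smul_eq_mul]
  ring

lemma re_s_eq (L : ℝ) (β : ℝ) (n : ℤ) :
    (((β : ℝ) : ℂ) - 2 * Real.pi * Complex.I * n / (L : ℝ)).re = β := by
  simp [Complex.div_ofReal_re, Complex.sub_re, Complex.mul_re, Complex.mul_im]

lemma cpow_neg_s_eq (hm : 2 ≤ m) (hΔ₁ : 0 < Δ₁) (n : ℤ) :
    ((m:ℝ):ℂ) ^ (-((((-(Real.log Δ₁ / Real.log m) : ℝ) : ℂ))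
        - 2 * Real.pi * Complex.I * n / ((Real.log m : ℝ) : ℂ))) = (Δ₁ : ℂ) := by
  set L := Real.log m with hLdef
  have hL : 0 < L := hL_pos hm
  have hLC : (L : ℂ) ≠ 0 := Complex.ofReal_ne_zero.mpr hL.ne'
  have hmne : ((m:ℝ):ℂ) ≠ 0 := Complex.ofReal_ne_zero.mpr (hm_pos hm).ne'
  rw [Complex.cpow_def_of_ne_zero hmne, ← Complex.ofReal_log (hm_pos hm).le]
  have harg : ((L : ℝ) : ℂ) * (-((((-(Real.log Δ₁ / L) : ℝ) : ℂ))
      - 2 * Real.pi * Complex.I * n / ((L : ℝ) : ℂ)))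
      = ((Real.log Δ₁ : ℝ) : ℂ) + n * (2 * Real.pi * Complex.I) := by
    push_cast
    field_simp
    ring
  rw [harg, Complex.exp_add, Complex.exp_int_mul_two_pi_mul_I, mul_one,
    ← Complex.ofReal_exp, Real.exp_log hΔ₁]

end MellinH

section Norms

variable {m : ℕ} {Δ₁ Δ₂ : ℝ}

lemma ftilde_nonneg (hm : 2 ≤ m) (hΔ₁ : 0 < Δ₁) (hΔ₂ : 0 < Δ₂) {t : ℝ} (ht : 0 < t) :
    0 ≤ ftildeReg m Δ₁ Δ₂ t := by
  rw [ftilde_eq m Δ₁ Δ₂ hm hΔ₁ ht]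
  have h1 := hker_nonneg m hm ht
  have h2 : (0:ℝ) ≤ t ^ (-(Real.log Δ₁ / Real.log m)) := (Real.rpow_pos_of_pos ht _).le
  positivity

lemma norm_exp_fourier (n : ℤ) (x : ℝ) :
    ‖Complex.exp (-2 * Real.pi * Complex.I * n * x)‖ = 1 := by
  rw [Complex.norm_exp]
  have h0 : (-2 * Real.pi * Complex.I * n * x).re = 0 := by
    simp [Complex.mul_re, Complex.mul_im]
  rw [h0, Real.exp_zero]

lemma integrableOn_gC (hm : 2 ≤ m) {s : ℂ} (hs : 1 < s.re) :
    MeasureTheory.IntegrableOn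
      (fun t : ℝ ↦ (t:ℂ) ^ (s - 1) * ((hker m t : ℝ) : ℂ)) (Set.Ioi 0) := by
  have h := (hasMellin_hker (m := m) hm hs).1
  simpa only [MellinConvergent, smul_eq_mul] using h

lemma integrableOn_gsigma (hm : 2 ≤ m) {s : ℂ} (hs : 1 < s.re) :
    MeasureTheory.IntegrableOn
      (fun t : ℝ ↦ t ^ (s.re - 1) * hker m t) (Set.Ioi 0) := by
  have h := (integrableOn_gC (m := m) hm hs).norm
  apply MeasureTheory.IntegrableOn.congr_fun h _ measurableSet_Ioi
  intro t ht
  simp only [norm_mul]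
  rw [Complex.norm_cpow_eq_rpow_re_of_pos ht, Complex.norm_real, Real.norm_eq_abs,
    _root_.abs_of_nonneg (hker_nonneg m hm ht), Complex.sub_re, Complex.one_re]

end Norms

theorem regularLadder_fourier_coefficients (m : ℕ) (Δ₁ Δ₂ : ℝ)
    (hm : 2 ≤ m) (hΔ₁ : 0 < Δ₁) (hΔ₂ : 0 < Δ₂)
    (htotal : m * Δ₁ + (m - 1 : ℝ) * Δ₂ = 1) (n : ℤ) :
    (∫ s in (0:ℝ)..1,
        (PhiReg m Δ₁ Δ₂ s : ℂ) * Complex.exp (-2 * Real.pi * Complex.I * n * s)) =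
      ((Δ₂ * (1 - Δ₁) / (Δ₁ * Real.log m) : ℝ) : ℂ) *
        Complex.Gamma ((-(Real.log Δ₁ / Real.log m) : ℝ) -
          2 * Real.pi * Complex.I * n / (Real.log m : ℝ)) *
        riemannZeta ((-(Real.log Δ₁ / Real.log m) : ℝ) -
          2 * Real.pi * Complex.I * n / (Real.log m : ℝ)) := by
  have hmr : (0:ℝ) < m := hm_pos hm
  have hL : 0 < Real.log m := hL_pos hm
  set L : ℝ := Real.log m with hLdef
  set β : ℝ := -(Real.log Δ₁ / Real.log m) with hβdef
  set sC : ℂ := ((β : ℝ) : ℂ) - 2 * Real.pi * Complex.I * n / ((L : ℝ) : ℂ) with hsdef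
  have hsre : sC.re = β := re_s_eq L β n
  have hβ1 : 1 < β := by
    have hm2 : (2:ℝ) ≤ m := by exact_mod_cast hm
    have hpos : 0 < ((m:ℝ)-1)*Δ₂ := by nlinarith
    have hΔlt : Δ₁ < ((m:ℝ))⁻¹ := by
      rw [← one_div, lt_div_iff₀ hmr]; nlinarith
    have hlog : Real.log Δ₁ < -L := by
      have := Real.log_lt_log hΔ₁ hΔlt
      rwa [Real.log_inv] at this
    have h3 : Real.log Δ₁ / L < -1 := (div_lt_iff₀ hL).mpr (by linarith)
    rw [hβdef]; linarith
  have hs1 : 1 < sC.re := by rw [hsre]; exact hβ1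
  set e : ℝ → ℂ := fun x ↦ Complex.exp (-2 * Real.pi * Complex.I * n * x) with hedef
  set fk : ℤ → ℝ → ℂ :=
    fun k x ↦ ((ftildeReg m Δ₁ Δ₂ ((m:ℝ) ^ ((k:ℝ)+x)) : ℝ) : ℂ) * e x with hfkdef
  have hrpow_pos : ∀ (k:ℤ) (x:ℝ), 0 < (m:ℝ) ^ ((k:ℝ)+x) :=
    fun k x ↦ Real.rpow_pos_of_pos hmr _
  have hcont : ∀ k : ℤ, Continuous (fk k) := by
    intro k
    apply Continuous.mul
    · apply Complex.continuous_ofReal.comp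
      apply (contOn_ftilde hm hΔ₁).comp_continuous
      · have hrw : (fun x:ℝ ↦ (m:ℝ)^((k:ℝ)+x)) = fun x ↦ Real.exp (L*((k:ℝ)+x)) :=
          funext fun x ↦ Real.rpow_def_of_pos hmr _
        rw [hrw]
        exact Real.continuous_exp.comp (continuous_const.mul
          (continuous_const.add continuous_id))
      · exact fun x ↦ hrpow_pos k x
    · exact Complex.continuous_exp.comp (continuous_const.mul Complex.continuous_ofReal)
  have hnorm : ∀ (k:ℤ) (x:ℝ), ‖fk k x‖ = ftildeReg m Δ₁ Δ₂ ((m:ℝ) ^ ((k:ℝ)+x)) := by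
    intro k x
    simp only [hfkdef, hedef]
    rw [norm_mul, norm_exp_fourier, mul_one, Complex.norm_real, Real.norm_eq_abs,
      _root_.abs_of_nonneg (ftilde_nonneg hm hΔ₁ hΔ₂ (hrpow_pos k x))]
  -- the real kernel sums
  have hggσ : MeasureTheory.IntegrableOn
      (fun t : ℝ ↦ t ^ (β - 1) * hker m t) (Set.Ioi 0) := by
    have h := integrableOn_gsigma (m := m) hm hs1
    rwa [hsre] at h
  have hle_exp : ∀ k : ℤ, Real.exp (L*k) ≤ Real.exp (L*(k+1)) := by
    intro k
    apply Real.exp_le_exp.mpr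
    nlinarith [hL.le]
  have hIsum : HasSum (fun k : ℤ ↦
      ∫ t in Set.Ico (Real.exp (L*k)) (Real.exp (L*(k+1))), t ^ (β - 1) * hker m t)
      (∫ t in Set.Ioi (0:ℝ), t ^ (β - 1) * hker m t) := by
    have h := MeasureTheory.hasSum_integral_iUnion
      (f := fun t : ℝ ↦ t ^ (β - 1) * hker m t)
      (s := fun k : ℤ ↦ Set.Ico (Real.exp (L*k)) (Real.exp (L*(k+1))))
      (fun k ↦ measurableSet_Ico) (pairwise_disjoint_Ico_exp hL)
      (by rw [iUnion_Ico_exp hL]; exact hggσ)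
    rwa [iUnion_Ico_exp hL] at h
  have hcne : L * Δ₁ / Δ₂ ≠ 0 := by positivity
  have hIk : ∀ k : ℤ, (∫ x in Set.Ioc (0:ℝ) 1, ‖fk k x‖)
      = (Δ₂/(L*Δ₁)) *
        ∫ t in Set.Ico (Real.exp (L*k)) (Real.exp (L*(k+1))), t ^ (β - 1) * hker m t := by
    intro k
    have h2 := subst_real (Δ₁ := Δ₁) (Δ₂ := Δ₂) hm hΔ₁ hΔ₂ k
    rw [← hLdef, ← hβdef] at h2
    have h3 : (∫ t in Set.Ico (Real.exp (L*k)) (Real.exp (L*(k+1))), t ^ (β - 1) * hker m t)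
        = ∫ t in (Real.exp (L*k))..(Real.exp (L*(k+1))), t ^ (β - 1) * hker m t := by
      rw [MeasureTheory.setIntegral_congr_set Ico_ae_eq_Ioc,
        ← intervalIntegral.integral_of_le (hle_exp k)]
    rw [h3, h2]
    have h4 : (∫ x in Set.Ioc (0:ℝ) 1, ‖fk k x‖)
        = ∫ x in (0:ℝ)..1, ftildeReg m Δ₁ Δ₂ ((m:ℝ) ^ ((k:ℝ)+x)) := by
      rw [← intervalIntegral.integral_of_le zero_le_one]
      apply intervalIntegral.integral_congr
      intro x _
      exact hnorm k x
    rw [h4]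
    field_simp
  have hrsummable : Summable (fun k : ℤ ↦ ∫ x in Set.Ioc (0:ℝ) 1, ‖fk k x‖) := by
    have : (fun k : ℤ ↦ ∫ x in Set.Ioc (0:ℝ) 1, ‖fk k x‖)
        = fun k : ℤ ↦ (Δ₂/(L*Δ₁)) *
          ∫ t in Set.Ico (Real.exp (L*k)) (Real.exp (L*(k+1))), t ^ (β - 1) * hker m t :=
      funext hIk
    rw [this]
    exact hIsum.summable.mul_left _
  have hint : ∀ k : ℤ, MeasureTheory.IntegrableOn (fk k) (Set.Ioc (0:ℝ) 1) :=
    fun k ↦ (hcont k).integrableOn_Ioc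
  have hlint : (∑' k : ℤ, ∫⁻ x in Set.Ioc (0:ℝ) 1, ‖fk k x‖₊) ≠ ⊤ := by
    have heq : ∀ k : ℤ, (∫⁻ x in Set.Ioc (0:ℝ) 1, ‖fk k x‖₊)
        = ENNReal.ofReal (∫ x in Set.Ioc (0:ℝ) 1, ‖fk k x‖) :=
      fun k ↦ (MeasureTheory.ofReal_integral_norm_eq_lintegral_enorm (hint k)).symm
    simp_rw [heq]
    rw [← ENNReal.ofReal_tsum_of_nonneg
      (fun k ↦ MeasureTheory.integral_nonneg (fun x ↦ norm_nonneg _)) hrsummable]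
    exact ENNReal.ofReal_ne_top
  -- main calc
  calc (∫ x in (0:ℝ)..1, (PhiReg m Δ₁ Δ₂ x : ℂ) * e x)
      = ∫ x in Set.Ioc (0:ℝ) 1, ∑' k : ℤ, fk k x := by
        rw [intervalIntegral.integral_of_le zero_le_one]
        apply MeasureTheory.setIntegral_congr_fun measurableSet_Ioc
        intro x _
        simp only []
        rw [show PhiReg m Δ₁ Δ₂ x = ∑' k : ℤ, ftildeReg m Δ₁ Δ₂ ((m : ℝ) ^ ((k : ℝ) + x)) from rfl, Complex.ofReal_tsum]
        exact (tsum_mul_right).symm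
    _ = ∑' k : ℤ, ∫ x in Set.Ioc (0:ℝ) 1, fk k x :=
        MeasureTheory.integral_tsum (fun k ↦ (hcont k).aestronglyMeasurable) hlint
    _ = ∑' k : ℤ, ((Δ₂/(L*Δ₁) : ℝ) : ℂ) *
          ∫ t in Set.Ico (Real.exp (L*k)) (Real.exp (L*(k+1))),
            (t:ℂ) ^ (sC - 1) * ((hker m t : ℝ) : ℂ) := by
        congr 1
        funext k
        have hsub := subst_complex (Δ₁ := Δ₁) (Δ₂ := Δ₂) hm hΔ₁ hΔ₂ n k
        rw [← hLdef, ← hβdef, ← hsdef] at hsub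
        have h3 : (∫ t in Set.Ico (Real.exp (L*k)) (Real.exp (L*(k+1))),
              (t:ℂ) ^ (sC - 1) * ((hker m t : ℝ) : ℂ))
            = ∫ t in (Real.exp (L*k))..(Real.exp (L*(k+1))),
              (t:ℂ) ^ (sC - 1) * ((hker m t : ℝ) : ℂ) := by
          rw [MeasureTheory.setIntegral_congr_set Ico_ae_eq_Ioc,
            ← intervalIntegral.integral_of_le (hle_exp k)]
        rw [h3, hsub, ← intervalIntegral.integral_of_le zero_le_one]
        rw [← mul_assoc, ← Complex.ofReal_mul]
        have : Δ₂ / (L * Δ₁) * (L * Δ₁ / Δ₂) = 1 := by field_simp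
        rw [this, Complex.ofReal_one, one_mul]
    _ = ((Δ₂/(L*Δ₁) : ℝ) : ℂ) * ∑' k : ℤ,
          ∫ t in Set.Ico (Real.exp (L*k)) (Real.exp (L*(k+1))),
            (t:ℂ) ^ (sC - 1) * ((hker m t : ℝ) : ℂ) := tsum_mul_left
    _ = ((Δ₂/(L*Δ₁) : ℝ) : ℂ) * ((1 - (Δ₁:ℂ)) * (Complex.Gamma sC * riemannZeta sC)) := by
        congr 1
        have hU := MeasureTheory.hasSum_integral_iUnion
          (f := fun t : ℝ ↦ (t:ℂ) ^ (sC - 1) * ((hker m t : ℝ) : ℂ))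
          (s := fun k : ℤ ↦ Set.Ico (Real.exp (L*k)) (Real.exp (L*(k+1))))
          (fun k ↦ measurableSet_Ico) (pairwise_disjoint_Ico_exp hL)
          (by rw [iUnion_Ico_exp hL]; exact integrableOn_gC hm hs1)
        rw [hU.tsum_eq, iUnion_Ico_exp hL]
        have hmel := (hasMellin_hker (m := m) hm hs1).2
        have hcp := cpow_neg_s_eq (Δ₁ := Δ₁) hm hΔ₁ n
        rw [← hLdef, ← hβdef, ← hsdef] at hcp
        rw [hcp] at hmel
        rw [← hmel]
        simp only [mellin, smul_eq_mul]
    _ = ((Δ₂ * (1 - Δ₁) / (Δ₁ * L) : ℝ) : ℂ) * Complex.Gamma sC * riemannZeta sC := by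
        have hd1 : (Δ₁:ℂ) ≠ 0 := Complex.ofReal_ne_zero.mpr hΔ₁.ne'
        have hLC : (L:ℂ) ≠ 0 := Complex.ofReal_ne_zero.mpr hL.ne'
        push_cast
        field_simp
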